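/- Let $H \in (-1,1)$, $\rho > 0$, $s \ge 0$, and set $C = -H\cosh(2\rho) + \dfrac{\sinh(2\rho)\cosh(\rho)\,s}{\sqrt{1+\cosh^2(\rho)\,s^2}}$. Then the function $g(r) = H\coth(2r) + C\,\operatorname{csch}(2r)$ satisfies the ordinary differential equation $g'(r) + g(r)\,(\coth(r) + \tanh(r)) - 2H = 0$ for all $r > 0$, and moreover $g(\rho) = \dfrac{\cosh(\rho)\,s}{\sqrt{1+\cosh^2(\rho)\,s^2}}$. -/

import Mathlib

open Real

noncomputable def coth (x : ℝ) : ℝ := Real.cosh x / Real.sinh x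

noncomputable def csch (x : ℝ) : ℝ := 1 / Real.sinh x

/-- The function `g(r) = H coth(2r) + C csch(2r)`, with
`C = -H cosh(2ρ) + sinh(2ρ) cosh(ρ) s / √(1 + cosh²(ρ) s²)`, solves the ODE
`g'(r) + g(r)(coth r + tanh r) - 2H = 0` on `(0,∞)` and satisfies
`g(ρ) = cosh(ρ) s / √(1 + cosh²(ρ) s²)`. -/
theorem stmt_0 (H ρ s : ℝ) (hH : H ∈ Set.Ioo (-1 : ℝ) 1) (hρ : 0 < ρ) (hs : 0 ≤ s)
    (C : ℝ)
    (hC : C = -H * Real.cosh (2 * ρ) +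
      Real.sinh (2 * ρ) * Real.cosh ρ * s / Real.sqrt (1 + Real.cosh ρ ^ 2 * s ^ 2))
    (g : ℝ → ℝ) (hg : ∀ r, g r = H * coth (2 * r) + C * csch (2 * r)) :
    (∀ r > 0, HasDerivAt g (2 * H - g r * (coth r + Real.tanh r)) r) ∧
    g ρ = Real.cosh ρ * s / Real.sqrt (1 + Real.cosh ρ ^ 2 * s ^ 2) := by
  have hfun : g = fun r => H * coth (2 * r) + C * csch (2 * r) := funext hg
  constructor
  · intro r hr
    have hs2 : Real.sinh (2 * r) ≠ 0 := ne_of_gt (Real.sinh_pos_iff.2 (by linarith))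
    have hsr : Real.sinh r ≠ 0 := ne_of_gt (Real.sinh_pos_iff.2 hr)
    have hcr : Real.cosh r ≠ 0 := ne_of_gt (Real.cosh_pos r)
    have h2r : HasDerivAt (fun x : ℝ => 2 * x) 2 r := by
      simpa using (hasDerivAt_id r).const_mul 2
    have hsinh : HasDerivAt (fun x : ℝ => Real.sinh (2 * x)) (Real.cosh (2 * r) * 2) r :=
      h2r.sinh
    have hcosh : HasDerivAt (fun x : ℝ => Real.cosh (2 * x)) (Real.sinh (2 * r) * 2) r :=
      h2r.cosh
    have hq : HasDerivAt (fun x : ℝ => coth (2 * x))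
        ((Real.sinh (2 * r) * 2 * Real.sinh (2 * r) -
          Real.cosh (2 * r) * (Real.cosh (2 * r) * 2)) / Real.sinh (2 * r) ^ 2) r := by
      simpa [coth, Pi.div_def] using hcosh.div hsinh hs2
    have hi : HasDerivAt (fun x : ℝ => csch (2 * x))
        (-(Real.cosh (2 * r) * 2) / Real.sinh (2 * r) ^ 2) r := by
      simpa [csch, one_div, Pi.inv_def] using hsinh.inv hs2
    have hd : HasDerivAt (fun x : ℝ => H * coth (2 * x) + C * csch (2 * x)) _ r :=
      (hq.const_mul H).add (hi.const_mul C)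
    rw [hfun]
    convert hd using 1
    have hsm : Real.sinh (2 * r) = 2 * Real.sinh r * Real.cosh r := Real.sinh_two_mul r
    have hcm : Real.cosh (2 * r) = Real.cosh r ^ 2 + Real.sinh r ^ 2 := Real.cosh_two_mul r
    have hpy : Real.cosh r ^ 2 = 1 + Real.sinh r ^ 2 := by
      have := Real.cosh_sq_sub_sinh_sq r; nlinarith
    simp only [coth, csch, Real.tanh_eq_sinh_div_cosh, hsm, hcm]
    field_simp
    ring
  · rw [hg ρ, hC]
    have hs2 : Real.sinh (2 * ρ) ≠ 0 := ne_of_gt (Real.sinh_pos_iff.2 (by linarith))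
    simp only [coth, csch]
    field_simp
    ring
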